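/- If S ⊆ G ⊆ P = ∏_{n∈ℕ} ℤ and the cardinality of G is less than the pseudo-intersection number 𝔭, then G is not weakly S-binding: there exists an endomorphism f of P mapping G into S = ⊕_{n∈ℕ} ℤ such that f(S) has infinite rank. -/

import Mathlib

open Cardinal

/-- `S = ⊕_{n∈ℕ} ℤ`, the finitely supported sequences, as a subgroup of the
Baer–Specker group `P = ∏_{n∈ℕ} ℤ`. -/
def SpeckerS : AddSubgroup (ℕ → ℤ) where
  carrier := {x | (Function.support x).Finite}
  zero_mem' := by simp
  add_mem' {a b} ha hb := (ha.union hb).subset (Function.support_add a b)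
  neg_mem' {a} ha := by simpa using ha

/-- A family of sets has the strong finite intersection property if every
finite subfamily has infinite intersection. -/
def SFIP (F : Set (Set ℕ)) : Prop :=
  ∀ t : Finset (Set ℕ), ↑t ⊆ F → (⋂ s ∈ t, s).Infinite

/-- `A` is a pseudo-intersection of the family `F`. -/
def IsPseudoIntersection (A : Set ℕ) (F : Set (Set ℕ)) : Prop :=
  A.Infinite ∧ ∀ s ∈ F, (A \ s).Finite

/-- The pseudo-intersection number `𝔭`: the least cardinality of a family of
subsets of `ℕ` with the strong finite intersection property but with no
infinite pseudo-intersection. -/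
noncomputable def pNumber : Cardinal :=
  sInf {c : Cardinal | ∃ F : Set (Set ℕ), #F = c ∧ SFIP F ∧
    ¬ ∃ A : Set ℕ, IsPseudoIntersection A F}

abbrev SpCode : Type := ℕ × List ℤ

def spDot (x : ℕ → ℤ) (p : SpCode) : ℤ :=
  ∑ j ∈ Finset.range p.2.length, p.2.getD j 0 * x (p.1 + j)

def spGood (p : SpCode) : Prop := ∃ j, j < p.2.length ∧ p.2.getD j 0 ≠ 0

def spT (x : ℕ → ℤ) : Set ℕ :=
  {n | ∃ p : SpCode, Encodable.encode p = n ∧ spGood p ∧ spDot x p = 0}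

def spU (m : ℕ) : Set ℕ :=
  {n | ∃ p : SpCode, Encodable.encode p = n ∧ spGood p ∧ m ≤ p.1}

lemma sp_getD_ofFn {n : ℕ} (a : Fin n → ℤ) (j : ℕ) (h : j < n) :
    (List.ofFn a).getD j 0 = a ⟨j, h⟩ := by
  rw [List.getD_eq_getElem _ _ (by simpa using h), List.getElem_ofFn]

lemma sp_spDot_ofFn {n : ℕ} (x : ℕ → ℤ) (st : ℕ) (a : Fin n → ℤ) :
    spDot x (st, List.ofFn a) = ∑ j : Fin n, a j * x (st + j) := by
  rw [spDot]
  simp only [List.length_ofFn]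
  rw [← Fin.sum_univ_eq_sum_range (fun j => (List.ofFn a).getD j 0 * x (st + j)) n]
  exact Finset.sum_congr rfl fun j _ => by rw [sp_getD_ofFn a j j.isLt]

lemma sp_orth (k N : ℕ) (y : Fin k → (ℕ → ℤ)) :
    ∃ a : Fin (k+1) → ℤ, (∃ j, a j ≠ 0) ∧ ∀ i, ∑ j, a j * y i (N + j) = 0 := by
  set w : Fin (k+1) → (Fin k → ℤ) := fun j i => y i (N + (j : ℕ)) with hw
  have hni : ¬ LinearIndependent ℤ w := by
    intro h
    have h2 := h.fintype_card_le_finrank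
    rw [Module.finrank_fin_fun] at h2
    simp only [Fintype.card_fin] at h2
    omega
  rw [Fintype.not_linearIndependent_iff] at hni
  obtain ⟨g, hg, j0, hj0⟩ := hni
  refine ⟨g, ⟨j0, hj0⟩, fun i => ?_⟩
  have := congrFun hg i
  simpa [w, Finset.sum_apply, smul_eq_mul] using this

lemma sp_single_mem (j : ℕ) (c : ℤ) : Pi.single j c ∈ SpeckerS := by
  show (Function.support (Pi.single j c)).Finite
  apply Set.Finite.subset (Set.finite_singleton j)
  rw [Function.support_subset_iff]
  intro m hm
  simp only [Set.mem_singleton_iff]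
  by_contra hne
  exact hm (by simp [Pi.single_eq_of_ne hne])

theorem stmt_18 (G : AddSubgroup (ℕ → ℤ)) (hSG : SpeckerS ≤ G)
    (hcard : #G < pNumber) :
    ∃ f : (ℕ → ℤ) →+ (ℕ → ℤ),
      (∀ x ∈ G, f x ∈ SpeckerS) ∧
      ℵ₀ ≤ Module.rank ℤ (SpeckerS.map f) := by
  classical
  -- G is infinite
  have hGinf : ℵ₀ ≤ #G := by
    have hinj : Function.Injective
        (fun n : ℕ => (⟨Pi.single n 1, hSG (sp_single_mem n 1)⟩ : G)) := by
      intro n m h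
      have h2 : (Pi.single n 1 : ℕ → ℤ) = Pi.single m 1 := congrArg Subtype.val h
      by_contra hne
      have := congrFun h2 n
      rw [Pi.single_eq_same, Pi.single_eq_of_ne (Ne.symm ?_)] at this
      · exact one_ne_zero this
      · exact fun e => hne e.symm
    have : Infinite G := Infinite.of_injective _ hinj
    exact Cardinal.aleph0_le_mk G
  -- the family
  set F : Set (Set ℕ) := (spT '' (G : Set (ℕ → ℤ))) ∪ (spU '' Set.univ) with hF
  have hFcard : #F < pNumber := by
    have h1 : #F ≤ #(↥(G : Set (ℕ → ℤ))) + #(↥(Set.univ : Set ℕ)) :=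
      (Cardinal.mk_union_le _ _).trans
        (add_le_add Cardinal.mk_image_le Cardinal.mk_image_le)
    have h2 : #(↥(Set.univ : Set ℕ)) = ℵ₀ := by simp
    have h3 : #F ≤ #G + ℵ₀ := by rw [← h2]; exact h1
    have h4 : #G + ℵ₀ ≤ #G + #G := add_le_add le_rfl hGinf
    rw [Cardinal.add_eq_self hGinf] at h4
    exact lt_of_le_of_lt (h3.trans h4) hcard
  -- choice functions extracting witnesses from members of F
  set χ : Set ℕ → (ℕ → ℤ) := fun s => if h : ∃ x, spT x = s then h.choose else 0 with hχ
  have χspec : ∀ s : Set ℕ, (∃ x, spT x = s) → spT (χ s) = s := by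
    intro s hs
    show spT (if h : ∃ x, spT x = s then h.choose else 0) = s
    rw [dif_pos hs]; exact hs.choose_spec
  set μ : Set ℕ → ℕ := fun s => if h : ∃ m, spU m = s then h.choose else 0 with hμ
  have μspec : ∀ s : Set ℕ, (∃ m, spU m = s) → spU (μ s) = s := by
    intro s hs
    show spU (if h : ∃ m, spU m = s then h.choose else 0) = s
    rw [dif_pos hs]; exact hs.choose_spec
  -- SFIP
  have hSFIP : SFIP F := by
    intro t ht
    set k := t.card with hk
    set N₀ := t.sup μ with hN₀
    set y : Fin k → (ℕ → ℤ) := fun i => χ ((t.equivFin.symm i) : Set ℕ) with hy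
    have horth := fun st => sp_orth k st y
    set a : ℕ → (Fin (k+1) → ℤ) := fun st => (horth st).choose with ha
    set P : ℕ → SpCode := fun i => (N₀ + i, List.ofFn (a (N₀ + i))) with hP
    have hgood : ∀ i, spGood (P i) := by
      intro i
      obtain ⟨⟨j0, hj0⟩, -⟩ := (horth (N₀ + i)).choose_spec
      exact ⟨j0, by simp [hP]; omega, by rw [sp_getD_ofFn _ _ (j0.isLt)]; simpa using hj0⟩
    have hmem : ∀ i, Encodable.encode (P i) ∈ ⋂ s ∈ t, s := by
      intro i
      rw [Set.mem_iInter₂]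
      intro s hs
      rcases ht hs with ⟨x, -, hxs⟩ | ⟨m, -, hms⟩
      · -- T-type
        have hex : ∃ x, spT x = s := ⟨x, hxs⟩
        rw [← χspec s hex]
        refine ⟨P i, rfl, hgood i, ?_⟩
        show spDot (χ s) (P i) = 0
        rw [hP, sp_spDot_ofFn]
        obtain ⟨-, hsum⟩ := (horth (N₀ + i)).choose_spec
        have h5 := hsum (t.equivFin ⟨s, hs⟩)
        simp only [hy, Equiv.symm_apply_apply] at h5
        exact h5
      · -- U-type
        have hex : ∃ m, spU m = s := ⟨m, hms⟩
        rw [← μspec s hex]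
        refine ⟨P i, rfl, hgood i, ?_⟩
        have : μ s ≤ N₀ := Finset.le_sup hs
        simp only [hP]
        omega
    have hinj : Function.Injective (fun i => Encodable.encode (P i)) := by
      intro i j h
      have := Encodable.encode_injective h
      have : N₀ + i = N₀ + j := congrArg Prod.fst this
      omega
    exact Set.infinite_of_injective_forall_mem hinj hmem
  -- pseudo-intersection
  have hPI : ∃ A : Set ℕ, IsPseudoIntersection A F := by
    by_contra h
    have : pNumber ≤ #F := csInf_le' ⟨F, rfl, hSFIP, h⟩
    exact absurd (this.trans_lt hFcard) (lt_irrefl _)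
  obtain ⟨A, hAinf, hAsub⟩ := hPI
  -- picking codes from A with large starts
  have H : ∀ m, ∃ p : SpCode, Encodable.encode p ∈ A ∧ spGood p ∧ m ≤ p.1 := by
    intro m
    have hUF : spU m ∈ F := Or.inr ⟨m, trivial, rfl⟩
    have h1 : (A ∩ spU m).Infinite := by
      have h2 := hAinf.diff (hAsub _ hUF)
      rwa [Set.diff_diff_right_self] at h2
    obtain ⟨n, hnA, hnU⟩ := h1.nonempty
    obtain ⟨p, hpe, hpg, hpm⟩ := hnU
    exact ⟨p, hpe ▸ hnA, hpg, hpm⟩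
  set h : ℕ → SpCode := fun m => (H m).choose with hh
  set endp : SpCode → ℕ := fun p => p.1 + p.2.length with hendp
  set r : ℕ → SpCode := fun i => Nat.rec (h 0) (fun _ q => h (endp q)) i with hr
  have r_succ : ∀ i, r (i+1) = h (endp (r i)) := fun i => rfl
  have rA : ∀ i, Encodable.encode (r i) ∈ A := by
    intro i; cases i with
    | zero => exact (H 0).choose_spec.1
    | succ n => exact (H (endp (r n))).choose_spec.1
  have rg : ∀ i, spGood (r i) := by
    intro i; cases i with
    | zero => exact (H 0).choose_spec.2.1
    | succ n => exact (H (endp (r n))).choose_spec.2.1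
  have rstep : ∀ i, endp (r i) ≤ (r (i+1)).1 := by
    intro i
    exact (H (endp (r i))).choose_spec.2.2
  have lenpos : ∀ i, 1 ≤ (r i).2.length := by
    intro i; obtain ⟨j, hj, -⟩ := rg i; omega
  have smono : StrictMono (fun i => (r i).1) := by
    apply strictMono_nat_of_lt_succ
    intro i
    have h1 := rstep i
    have h2 := lenpos i
    simp only [hendp] at h1
    omega
  have block_le : ∀ i i', i < i' → endp (r i) ≤ (r i').1 := by
    intro i i' hii
    exact (rstep i).trans (smono.monotone hii)
  -- the endomorphism
  set ff : (ℕ → ℤ) → (ℕ → ℤ) := fun x i => spDot x (r i) with hff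
  have ffadd : ∀ x y, ff (x + y) = ff x + ff y := by
    intro x y
    funext i
    simp [hff, spDot, mul_add, Finset.sum_add_distrib]
  set f : (ℕ → ℤ) →+ (ℕ → ℤ) := AddMonoidHom.mk' ff ffadd with hfdef
  have fapp : ∀ x, f x = ff x := fun x => rfl
  refine ⟨f, ?_, ?_⟩
  · -- f maps G into S
    intro x hx
    have hTF : spT x ∈ F := Or.inl ⟨x, hx, rfl⟩
    have hfin := hAsub _ hTF
    show (Function.support (f x)).Finite
    have hrinj : Function.Injective (fun i => Encodable.encode (r i)) := by
      intro i j hij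
      exact smono.injective (congrArg Prod.fst (Encodable.encode_injective hij))
    apply Set.Finite.subset (hfin.preimage hrinj.injOn)
    intro i hi
    refine ⟨rA i, fun hmem => ?_⟩
    obtain ⟨p, hpe, -, hpd⟩ := hmem
    have hpr : p = r i := Encodable.encode_injective hpe
    have hz : spDot x (r i) = 0 := by rw [← hpr]; exact hpd
    exact hi hz
  · -- infinite rank
    set w : ℕ → ℕ := fun i => (rg i).choose with hw
    have hwlt : ∀ i, w i < (r i).2.length := fun i => (rg i).choose_spec.1
    set c : ℕ → ℤ := fun i => (r i).2.getD (w i) 0 with hc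
    have hcne : ∀ i, c i ≠ 0 := fun i => (rg i).choose_spec.2
    set jj : ℕ → ℕ := fun i => (r i).1 + w i with hjj
    have key : ∀ i, ff (Pi.single (jj i) 1) = Pi.single i (c i) := by
      intro i
      funext i'
      show spDot (Pi.single (jj i) 1 : ℕ → ℤ) (r i') = (Pi.single i (c i) : ℕ → ℤ) i'
      rcases eq_or_ne i' i with rfl | hne
      · rw [Pi.single_eq_same, spDot]
        rw [Finset.sum_eq_single_of_mem (w i') (Finset.mem_range.mpr (hwlt i'))]
        · rw [show (r i').1 + w i' = jj i' from rfl, Pi.single_eq_same, mul_one]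

        · intro b hb hbne
          rw [Pi.single_eq_of_ne (by simp only [hjj]; omega), mul_zero]
      · rw [Pi.single_eq_of_ne hne, spDot]
        apply Finset.sum_eq_zero
        intro b hb
        rw [Finset.mem_range] at hb
        have hneq : (r i').1 + b ≠ jj i := by
          rcases lt_or_gt_of_ne hne with hlt | hgt
          · have := block_le i' i hlt
            simp only [hendp] at this
            simp only [hjj]
            omega
          · have := block_le i i' hgt
            simp only [hendp] at this
            have h2 := hwlt i
            simp only [hjj]
            omega
        rw [Pi.single_eq_of_ne hneq, mul_zero]
    -- the independent family inside the image
    have hmem2 : ∀ i, (Pi.single i (c i) : ℕ → ℤ) ∈ SpeckerS.map f := by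
      intro i
      exact ⟨Pi.single (jj i) 1, sp_single_mem _ _, by rw [fapp]; exact key i⟩
    set u : ℕ → ↥(SpeckerS.map f) := fun i => ⟨Pi.single i (c i), hmem2 i⟩ with hu
    have hli : LinearIndependent ℤ (fun i : ℕ => (Pi.single i (c i) : ℕ → ℤ)) := by
      rw [linearIndependent_iff']
      intro s g hg i hi
      have hcf := congrFun hg i
      rw [Finset.sum_apply] at hcf
      rw [Finset.sum_eq_single_of_mem i hi] at hcf
      · simp only [Pi.smul_apply, Pi.single_eq_same, smul_eq_mul, Pi.zero_apply] at hcf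
        rcases mul_eq_zero.mp hcf with h | h
        · exact h
        · exact absurd h (hcne i)
      · intro b hb hbne
        simp [Pi.single_eq_of_ne (Ne.symm hbne)]
    have hliu : LinearIndependent ℤ u := by
      apply LinearIndependent.of_comp ((SpeckerS.map f).subtype.toIntLinearMap)
      exact hli
    exact hliu.aleph0_le_rank
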